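/- Let J : ℝ^n → ℝ be differentiable with L-Lipschitz gradient and bounded above by J_max, let (θ_t)_{t≥1} be generated by θ_{t+1} = θ_t + η_t g_t where ‖g_t‖ ≤ G and g_tᵀ ∇J(θ_t) ≥ ‖∇J(θ_t)‖² - ε_t with ε_t ≥ 0. Then for all T ≥ 2: Σ_{t=1}^{T-1} η_t ‖∇J(θ_t)‖² ≤ J_max - J(θ_1) + Σ_{t=1}^{T-1} η_t ε_t + (L G²/2) Σ_{t=1}^{T-1} η_t². -/

import Mathlib

open intervalIntegral in
lemma descent_lemma {n : ℕ} (L : ℝ) (hL : 0 ≤ L)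
    (J : EuclideanSpace ℝ (Fin n) → ℝ) (hJ : Differentiable ℝ J)
    (hLip : ∀ x y, ‖gradient J x - gradient J y‖ ≤ L * ‖x - y‖)
    (x v : EuclideanSpace ℝ (Fin n)) :
    |J (x + v) - J x - inner ℝ (gradient J x) v| ≤ L / 2 * ‖v‖ ^ 2 := by

  have hgradcont : Continuous (gradient J) := by
    have : LipschitzWith (Real.toNNReal L) (gradient J) := by
      refine LipschitzWith.of_dist_le_mul fun a b => ?_
      simpa [dist_eq_norm, Real.coe_toNNReal L hL] using hLip a b
    exact this.continuous
  set h' : ℝ → ℝ := fun s => inner ℝ (gradient J (x + s • v)) v with hh'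
  have hline : ∀ s : ℝ, HasDerivAt (fun s : ℝ => x + s • v) v s := fun s => by
    simpa using ((hasDerivAt_id s).smul_const v).const_add x
  have hderiv : ∀ s : ℝ, HasDerivAt (fun s : ℝ => J (x + s • v)) (h' s) s := by
    intro s
    have h1 : HasFDerivAt J (InnerProductSpace.toDual ℝ (EuclideanSpace ℝ (Fin n)) (gradient J (x + s • v))) (x + s • v) :=
      (hasGradientAt_iff_hasFDerivAt.1 (hJ _).hasGradientAt)
    exact (h1.comp_hasDerivAt s (hline s))
  have hcont : Continuous h' :=
    (hgradcont.comp (continuous_const.add (continuous_id.smul continuous_const))).inner continuous_const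
  have hftc : ∫ s in (0:ℝ)..1, h' s = J (x + v) - J x := by
    have := integral_eq_sub_of_hasDerivAt (f := fun s : ℝ => J (x + s • v))
      (f' := h') (a := 0) (b := 1) (fun s _ => hderiv s)
      (hcont.intervalIntegrable 0 1)
    simpa using this
  have key : J (x + v) - J x - inner ℝ (gradient J x) v
      = ∫ s in (0:ℝ)..1, (h' s - h' 0) := by
    rw [intervalIntegral.integral_sub (hcont.intervalIntegrable 0 1)
      (intervalIntegrable_const), hftc, intervalIntegral.integral_const]
    simp [hh']
  rw [key]
  have hbound : ∀ s ∈ Set.Icc (0:ℝ) 1, |h' s - h' 0| ≤ L * s * ‖v‖ ^ 2 := by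
    intro s hs
    have : h' s - h' 0 = inner ℝ (gradient J (x + s • v) - gradient J x) v := by
      simp [hh', inner_sub_left]
    rw [this]
    calc |inner ℝ (gradient J (x + s • v) - gradient J x) v|
        ≤ ‖gradient J (x + s • v) - gradient J x‖ * ‖v‖ := abs_real_inner_le_norm _ _
      _ ≤ (L * ‖(x + s • v) - x‖) * ‖v‖ := by
          exact mul_le_mul_of_nonneg_right (hLip _ _) (norm_nonneg _)
      _ = L * s * ‖v‖ ^ 2 := by
          simp [norm_smul, abs_of_nonneg hs.1]; ring
  calc |∫ s in (0:ℝ)..1, (h' s - h' 0)|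
      ≤ ∫ s in (0:ℝ)..1, L * s * ‖v‖ ^ 2 := by
        refine intervalIntegral.abs_integral_le_integral_abs (by norm_num) |>.trans ?_
        refine intervalIntegral.integral_mono_on (by norm_num) ?_ ?_ ?_
        · exact ((hcont.sub continuous_const).abs).intervalIntegrable 0 1
        · exact ((continuous_const.mul continuous_id).mul continuous_const).intervalIntegrable 0 1
        · exact hbound
    _ = L / 2 * ‖v‖ ^ 2 := by
        simp [intervalIntegral.integral_mul_const, mul_assoc, integral_id]
        ring


/-- For `J` differentiable with `L`-Lipschitz gradient and bounded above by
`Jmax`, iterates `θ_{t+1} = θ_t + η_t g_t` with `‖g_t‖ ≤ G`,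
`⟪g_t, ∇J(θ_t)⟫ ≥ ‖∇J(θ_t)‖² - ε_t` and `ε_t ≥ 0` satisfy, for all `T ≥ 2`,
`Σ_{t=1}^{T-1} η_t ‖∇J(θ_t)‖² ≤ Jmax - J(θ_1) + Σ_{t=1}^{T-1} η_t ε_t + (L G²/2) Σ_{t=1}^{T-1} η_t²`. -/
theorem stmt_8 (n : ℕ) (L G Jmax : ℝ) (hL : 0 < L) (hG : 0 < G)
    (J : EuclideanSpace ℝ (Fin n) → ℝ) (hJ : Differentiable ℝ J)
    (hLip : ∀ x y, ‖gradient J x - gradient J y‖ ≤ L * ‖x - y‖)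
    (hmax : ∀ x, J x ≤ Jmax)
    (θ g : ℕ → EuclideanSpace ℝ (Fin n)) (η ε : ℕ → ℝ)
    (hη : ∀ t, 0 < η t) (hε : ∀ t, 0 ≤ ε t)
    (hupd : ∀ t, θ (t + 1) = θ t + η t • g t)
    (hgnorm : ∀ t, ‖g t‖ ≤ G)
    (hgdir : ∀ t, inner ℝ (g t) (gradient J (θ t)) ≥ (‖gradient J (θ t)‖ : ℝ) ^ 2 - ε t) :
    ∀ T : ℕ, 2 ≤ T →
      ∑ t ∈ Finset.Icc 1 (T - 1), η t * ‖gradient J (θ t)‖ ^ 2 ≤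
        Jmax - J (θ 1) + (∑ t ∈ Finset.Icc 1 (T - 1), η t * ε t) +
          (L * G ^ 2 / 2) * ∑ t ∈ Finset.Icc 1 (T - 1), η t ^ 2 := by
  intro T hT
  -- per-step inequality
  have step : ∀ t : ℕ, η t * ‖gradient J (θ t)‖ ^ 2 ≤
      (J (θ (t + 1)) - J (θ t)) + η t * ε t + (L * G ^ 2 / 2) * η t ^ 2 := by
    intro t
    have hd := descent_lemma L hL.le J hJ hLip (θ t) (η t • g t)
    have habs := (abs_le.1 hd).1
    rw [← hupd t] at habs
    have hinner : (inner ℝ (gradient J (θ t)) (η t • g t) : ℝ)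
        = η t * inner ℝ (g t) (gradient J (θ t)) := by
      rw [real_inner_smul_right, real_inner_comm]
    have hnv : ‖η t • g t‖ ^ 2 ≤ η t ^ 2 * G ^ 2 := by
      rw [norm_smul]
      have h1 : ‖g t‖ ^ 2 ≤ G ^ 2 :=
        pow_le_pow_left₀ (norm_nonneg _) (hgnorm t) 2
      calc (‖(η t : ℝ)‖ * ‖g t‖) ^ 2 = ‖(η t : ℝ)‖ ^ 2 * ‖g t‖ ^ 2 := by ring
        _ ≤ ‖(η t : ℝ)‖ ^ 2 * G ^ 2 := by
            exact mul_le_mul_of_nonneg_left h1 (by positivity)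
        _ = η t ^ 2 * G ^ 2 := by rw [Real.norm_eq_abs, sq_abs]
    have h2 : η t * (‖gradient J (θ t)‖ ^ 2 - ε t) ≤ η t * inner ℝ (g t) (gradient J (θ t)) :=
      mul_le_mul_of_nonneg_left (hgdir t) (hη t).le
    have h3 : L / 2 * ‖η t • g t‖ ^ 2 ≤ L * G ^ 2 / 2 * η t ^ 2 := by
      calc L / 2 * ‖η t • g t‖ ^ 2 ≤ L / 2 * (η t ^ 2 * G ^ 2) :=
            mul_le_mul_of_nonneg_left hnv (by positivity)
        _ = L * G ^ 2 / 2 * η t ^ 2 := by ring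
    nlinarith [habs, hinner, h2, h3]
  have hIcc : Finset.Icc 1 (T - 1) = Finset.Ico 1 T := by
    have h : T - 1 + 1 = T := by omega
    rw [← Finset.Ico_add_one_right_eq_Icc, h]
  have htel : ∑ t ∈ Finset.Icc 1 (T - 1), (J (θ (t + 1)) - J (θ t)) = J (θ T) - J (θ 1) := by
    rw [hIcc, Finset.sum_Ico_eq_sub _ (by omega), Finset.sum_range_sub (fun t => J (θ t)),
      Finset.sum_range_sub (fun t => J (θ t))]
    ring
  calc ∑ t ∈ Finset.Icc 1 (T - 1), η t * ‖gradient J (θ t)‖ ^ 2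
      ≤ ∑ t ∈ Finset.Icc 1 (T - 1),
          ((J (θ (t + 1)) - J (θ t)) + η t * ε t + (L * G ^ 2 / 2) * η t ^ 2) :=
        Finset.sum_le_sum fun t _ => step t
    _ = (J (θ T) - J (θ 1)) + (∑ t ∈ Finset.Icc 1 (T - 1), η t * ε t) +
          (L * G ^ 2 / 2) * ∑ t ∈ Finset.Icc 1 (T - 1), η t ^ 2 := by
        rw [Finset.sum_add_distrib, Finset.sum_add_distrib, htel, Finset.mul_sum]
    _ ≤ Jmax - J (θ 1) + (∑ t ∈ Finset.Icc 1 (T - 1), η t * ε t) +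
          (L * G ^ 2 / 2) * ∑ t ∈ Finset.Icc 1 (T - 1), η t ^ 2 := by
        have := hmax (θ T); linarith
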